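/- Define, for k ∈ (0, k₀), Y₁²(k) = √(2ι₁(k)/k) and W₁²(k) = (ι₂(k) + 4k²ι₁(k))/(3(2kι₁(k))^{3/2}). Then Y₁² is strictly decreasing on (0, k₀) with Y₁²(k) → +∞ as k → 0⁺ and Y₁²(k) → 0 as k → k₀⁻, while W₁² is strictly increasing on (0, k₀) with W₁²(k) → 0 as k → 0⁺ and W₁²(k) → +∞ as k → k₀⁻. Consequently the parametric curve {(Y₁²(k), W₁²(k)) : k ∈ (0, k₀)} is the graph of a function W = W_conj^{21}(Y), positive and strictly decreasing from +∞ to 0 on Y ∈ (0, ∞). -/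

import Mathlib

open Real Set Filter Topology

/-- Complete elliptic integral of the first kind. -/
noncomputable def K (k : ℝ) : ℝ :=
  ∫ t in (0:ℝ)..(π/2), 1 / Real.sqrt (1 - k^2 * Real.sin t ^ 2)

/-- Complete elliptic integral of the second kind. -/
noncomputable def E (k : ℝ) : ℝ :=
  ∫ t in (0:ℝ)..(π/2), Real.sqrt (1 - k^2 * Real.sin t ^ 2)

noncomputable def ι₁ (k : ℝ) : ℝ := 2 * E k - K k

noncomputable def ι₂ (k : ℝ) : ℝ := K k - E k

noncomputable def Y12 (k : ℝ) : ℝ := Real.sqrt (2 * ι₁ k / k)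

noncomputable def W12 (k : ℝ) : ℝ :=
  (ι₂ k + 4 * k^2 * ι₁ k) / (3 * (2 * k * ι₁ k) ^ ((3:ℝ)/2))

/- ## auxiliary lemmas -/

section aux

lemma wpos {k : ℝ} (hk : k^2 < 1) (t : ℝ) : 0 < 1 - k^2 * Real.sin t ^ 2 := by
  nlinarith [Real.sin_sq_le_one t, sq_nonneg k, sq_nonneg (Real.sin t)]

lemma wge {k : ℝ} (t : ℝ) : 1 - k^2 ≤ 1 - k^2 * Real.sin t ^ 2 := by
  nlinarith [Real.sin_sq_le_one t, sq_nonneg k]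

lemma wle {k t : ℝ} : 1 - k^2 * Real.sin t ^ 2 ≤ 1 := by
  nlinarith [sq_nonneg k, sq_nonneg (Real.sin t)]

lemma sqrtw_pos {k : ℝ} (hk : k^2 < 1) (t : ℝ) :
    0 < Real.sqrt (1 - k^2 * Real.sin t ^ 2) := Real.sqrt_pos.2 (wpos hk t)

lemma contw (k : ℝ) : Continuous fun t : ℝ => 1 - k^2 * Real.sin t ^ 2 := by
  continuity

lemma cont_sqrtw (k : ℝ) : Continuous fun t : ℝ => Real.sqrt (1 - k^2 * Real.sin t ^ 2) :=
  (contw k).sqrt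

lemma cont_inv_sqrtw {k : ℝ} (hk : k^2 < 1) :
    Continuous fun t : ℝ => 1 / Real.sqrt (1 - k^2 * Real.sin t ^ 2) :=
  continuous_const.div (cont_sqrtw k) fun t => (sqrtw_pos hk t).ne'

lemma cont_inv_w32 {k : ℝ} (hk : k^2 < 1) :
    Continuous fun t : ℝ =>
      1 / ((1 - k^2 * Real.sin t ^ 2) * Real.sqrt (1 - k^2 * Real.sin t ^ 2)) :=
  continuous_const.div ((contw k).mul (cont_sqrtw k))
    fun t => (mul_pos (wpos hk t) (sqrtw_pos hk t)).ne'

lemma K_ge {k : ℝ} (hk : k^2 < 1) : π/2 ≤ K k := by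
  have key : ∀ t ∈ Icc (0:ℝ) (π/2),
      (1:ℝ) ≤ 1 / Real.sqrt (1 - k^2 * Real.sin t ^ 2) := by
    intro t _
    rw [le_one_div (by norm_num) (sqrtw_pos hk t)]
    simpa using sqrt_le_one.2 (wle (k := k) (t := t))
  have h := intervalIntegral.integral_mono_on (μ := MeasureTheory.volume) (a := (0:ℝ)) (b := π/2)
    (f := fun _ => (1:ℝ)) (g := fun t => 1 / Real.sqrt (1 - k^2 * Real.sin t ^ 2))
    (by positivity) (continuous_const.intervalIntegrable _ _)
    ((cont_inv_sqrtw hk).intervalIntegrable _ _) key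
  simpa [K, E, one_div] using h

lemma K_pos {k : ℝ} (hk : k^2 < 1) : 0 < K k := lt_of_lt_of_le (by positivity) (K_ge hk)

lemma E_le {k : ℝ} (hk : k^2 < 1) : E k ≤ π/2 := by
  have key : ∀ t ∈ Icc (0:ℝ) (π/2),
      Real.sqrt (1 - k^2 * Real.sin t ^ 2) ≤ 1 := fun t _ =>
    sqrt_le_one.2 wle
  have h := intervalIntegral.integral_mono_on (μ := MeasureTheory.volume) (a := (0:ℝ)) (b := π/2)
    (g := fun _ => (1:ℝ)) (f := fun t => Real.sqrt (1 - k^2 * Real.sin t ^ 2))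
    (by positivity) ((cont_sqrtw k).intervalIntegrable _ _)
    (continuous_const.intervalIntegrable _ _) key
  simpa [K, E, one_div] using h

lemma E_ge {k : ℝ} (hk : k^2 < 1) : (π/2) * Real.sqrt (1 - k^2) ≤ E k := by
  have key : ∀ t ∈ Icc (0:ℝ) (π/2),
      Real.sqrt (1 - k^2) ≤ Real.sqrt (1 - k^2 * Real.sin t ^ 2) := fun t _ =>
    Real.sqrt_le_sqrt (wge t)
  have h := intervalIntegral.integral_mono_on (μ := MeasureTheory.volume) (a := (0:ℝ)) (b := π/2)
    (f := fun _ => Real.sqrt (1 - k^2)) (g := fun t => Real.sqrt (1 - k^2 * Real.sin t ^ 2))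
    (by positivity) (continuous_const.intervalIntegrable _ _)
    ((cont_sqrtw k).intervalIntegrable _ _) key
  simpa [mul_comm, E] using h

lemma E_pos {k : ℝ} (hk : k^2 < 1) : 0 < E k := by
  have h1 : (0:ℝ) < (π/2) * Real.sqrt (1 - k^2) := by
    have : (0:ℝ) < 1 - k^2 := by linarith
    positivity
  linarith [E_ge hk]

lemma K_le {k : ℝ} (hk : k^2 < 1) : K k ≤ (π/2) / Real.sqrt (1 - k^2) := by
  have h1 : (0:ℝ) < 1 - k^2 := by linarith
  have key : ∀ t ∈ Icc (0:ℝ) (π/2),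
      1 / Real.sqrt (1 - k^2 * Real.sin t ^ 2) ≤ 1 / Real.sqrt (1 - k^2) := fun t _ =>
    one_div_le_one_div_of_le (Real.sqrt_pos.2 h1) (Real.sqrt_le_sqrt (wge t))
  have h := intervalIntegral.integral_mono_on (μ := MeasureTheory.volume) (a := (0:ℝ)) (b := π/2)
    (f := fun t => 1 / Real.sqrt (1 - k^2 * Real.sin t ^ 2))
    (g := fun _ => 1 / Real.sqrt (1 - k^2))
    (by positivity) ((cont_inv_sqrtw hk).intervalIntegrable _ _)
    (continuous_const.intervalIntegrable _ _) key
  calc K k ≤ (π/2 - 0) • (1 / Real.sqrt (1 - k^2)) := by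
        simpa [K, E, one_div] using h
    _ = (π/2) / Real.sqrt (1 - k^2) := by
        rw [smul_eq_mul]; ring

lemma EK_ineq {k : ℝ} (hk : k^2 < 1) : (1 - k^2) * K k ≤ E k := by
  have h1 : (0:ℝ) < 1 - k^2 := by linarith
  have key : ∀ t ∈ Icc (0:ℝ) (π/2),
      (1 - k^2) * (1 / Real.sqrt (1 - k^2 * Real.sin t ^ 2))
        ≤ Real.sqrt (1 - k^2 * Real.sin t ^ 2) := by
    intro t _
    have hw := wpos hk t
    have hs := sqrtw_pos hk t
    rw [mul_one_div, div_le_iff₀ hs, Real.mul_self_sqrt hw.le]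
    linarith [wge (k := k) t]
  have h := intervalIntegral.integral_mono_on (μ := MeasureTheory.volume) (a := (0:ℝ)) (b := π/2)
    (f := fun t => (1 - k^2) * (1 / Real.sqrt (1 - k^2 * Real.sin t ^ 2)))
    (g := fun t => Real.sqrt (1 - k^2 * Real.sin t ^ 2))
    (by positivity) ((continuous_const.mul (cont_inv_sqrtw hk)).intervalIntegrable _ _)
    ((cont_sqrtw k).intervalIntegrable _ _) key
  rwa [intervalIntegral.integral_const_mul] at h

end aux

section deriv

lemma hasDerivAt_w (x t : ℝ) :
    HasDerivAt (fun x : ℝ => 1 - x^2 * Real.sin t ^ 2) (-(2 * x * Real.sin t ^ 2)) x := by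
  simpa using ((hasDerivAt_pow 2 x).mul_const (Real.sin t ^ 2)).const_sub 1

lemma hasDerivAt_sqrtw {x : ℝ} (hx : x^2 < 1) (t : ℝ) :
    HasDerivAt (fun x : ℝ => Real.sqrt (1 - x^2 * Real.sin t ^ 2))
      (-(x * Real.sin t ^ 2) / Real.sqrt (1 - x^2 * Real.sin t ^ 2)) x := by
  have hw := wpos hx t
  have h2 := (hasDerivAt_w x t).sqrt hw.ne'
  convert h2 using 1
  have hs := (sqrtw_pos hx t).ne'
  field_simp

lemma hasDerivAt_inv_sqrtw {x : ℝ} (hx : x^2 < 1) (t : ℝ) :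
    HasDerivAt (fun x : ℝ => 1 / Real.sqrt (1 - x^2 * Real.sin t ^ 2))
      (x * Real.sin t ^ 2 /
        ((1 - x^2 * Real.sin t ^ 2) * Real.sqrt (1 - x^2 * Real.sin t ^ 2))) x := by
  have hw := wpos hx t
  have hs := sqrtw_pos hx t
  have h3 := (hasDerivAt_const x (1:ℝ)).fun_div (hasDerivAt_sqrtw hx t) hs.ne'
  refine h3.congr_deriv (Eq.symm ?_)
  rw [Real.sq_sqrt hw.le]
  simp only [zero_mul, one_mul, zero_sub, neg_div, neg_neg, div_div, mul_comm]

lemma ball_sq_lt {k x : ℝ} (hk : |k| < 1) (hx : x ∈ Metric.ball k ((1 - |k|)/2)) :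
    x^2 < ((1 + |k|)/2)^2 := by
  have h1 : |x - k| < (1 - |k|)/2 := by simpa [Real.dist_eq] using hx
  have h2 : |x| ≤ |x - k| + |k| := by
    calc |x| = |x - k + k| := by ring_nf
      _ ≤ |x - k| + |k| := abs_add_le _ _
  have h3 : |x| < (1 + |k|)/2 := by linarith
  nlinarith [sq_abs x, abs_nonneg x, abs_nonneg k]

lemma r_lt_one {k : ℝ} (hk : |k| < 1) : ((1 + |k|)/2)^2 < 1 := by
  have := abs_nonneg k
  nlinarith

lemma hasDerivAt_K {k : ℝ} (hk : |k| < 1) :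
    HasDerivAt K (∫ t in (0:ℝ)..(π/2),
      k * Real.sin t ^ 2 /
        ((1 - k^2 * Real.sin t ^ 2) * Real.sqrt (1 - k^2 * Real.sin t ^ 2))) k := by
  set r : ℝ := (1 + |k|)/2 with hr
  have hr1 : r^2 < 1 := r_lt_one hk
  have hrpos : 0 < r := by positivity
  have hε : (0:ℝ) < (1 - |k|)/2 := by linarith
  have hk2 : k^2 < 1 := by nlinarith [abs_nonneg k, sq_abs k]
  have hmem : ∀ x ∈ Metric.ball k ((1 - |k|)/2), x^2 < 1 :=
    fun x hx => lt_trans (ball_sq_lt hk hx) hr1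
  have key := intervalIntegral.hasDerivAt_integral_of_dominated_loc_of_deriv_le
    (F := fun x t => 1 / Real.sqrt (1 - x^2 * Real.sin t ^ 2))
    (F' := fun x t => x * Real.sin t ^ 2 /
      ((1 - x^2 * Real.sin t ^ 2) * Real.sqrt (1 - x^2 * Real.sin t ^ 2)))
    (x₀ := k) (a := (0:ℝ)) (b := π/2) (μ := MeasureTheory.volume)
    (bound := fun _ => r / ((1 - r^2) * Real.sqrt (1 - r^2))) (Metric.ball_mem_nhds k hε) ?_ ?_ ?_ ?_ ?_ ?_
  · exact key.2
  · filter_upwards [Metric.ball_mem_nhds k hε] with x hx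
    exact ((cont_inv_sqrtw (hmem x hx)).aestronglyMeasurable).restrict
  · exact (cont_inv_sqrtw hk2).intervalIntegrable _ _
  · exact (Continuous.aestronglyMeasurable (by
      exact continuous_const.mul (Real.continuous_sin.pow 2) |>.div
        ((contw k).mul (cont_sqrtw k))
        (fun t => (mul_pos (wpos hk2 t) (sqrtw_pos hk2 t)).ne'))).restrict
  · refine MeasureTheory.ae_of_all _ fun t _ x hx => ?_
    have hx2 : x^2 < 1 := hmem x hx
    have hw := wpos hx2 t
    have hs := sqrtw_pos hx2 t
    have h1r : (0:ℝ) < 1 - r^2 := by linarith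
    have habs : |x| < r := by
      have h1 : |x - k| < (1 - |k|)/2 := by simpa [Real.dist_eq] using hx
      have h2 : |x| ≤ |x - k| + |k| := by
        calc |x| = |x - k + k| := by ring_nf
          _ ≤ |x - k| + |k| := abs_add_le _ _
      simp only [hr]; linarith
    rw [Real.norm_eq_abs, abs_div]
    have hwr : 1 - r^2 ≤ 1 - x^2 * Real.sin t ^ 2 := by
      nlinarith [mul_le_of_le_one_right (sq_nonneg x) (Real.sin_sq_le_one t),
        sq_abs x, abs_nonneg x, habs]
    have hnum : |x * Real.sin t ^ 2| ≤ r := by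
      rw [abs_mul, abs_of_nonneg (sq_nonneg (Real.sin t))]
      nlinarith [Real.sin_sq_le_one t, abs_nonneg x, sq_nonneg (Real.sin t)]
    have hden : (1 - r^2) * Real.sqrt (1 - r^2)
        ≤ |(1 - x^2 * Real.sin t ^ 2) * Real.sqrt (1 - x^2 * Real.sin t ^ 2)| := by
      rw [abs_of_nonneg (mul_pos hw hs).le]
      exact mul_le_mul hwr (Real.sqrt_le_sqrt hwr) (Real.sqrt_nonneg _) hw.le
    exact div_le_div₀ hrpos.le hnum (by positivity) hden
  · exact (continuous_const.intervalIntegrable _ _)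
  · refine MeasureTheory.ae_of_all _ fun t _ x hx => hasDerivAt_inv_sqrtw (hmem x hx) t

lemma hasDerivAt_E {k : ℝ} (hk : |k| < 1) :
    HasDerivAt E (∫ t in (0:ℝ)..(π/2),
      -(k * Real.sin t ^ 2) / Real.sqrt (1 - k^2 * Real.sin t ^ 2)) k := by
  set r : ℝ := (1 + |k|)/2 with hr
  have hr1 : r^2 < 1 := r_lt_one hk
  have hrpos : 0 < r := by positivity
  have hε : (0:ℝ) < (1 - |k|)/2 := by linarith
  have hk2 : k^2 < 1 := by nlinarith [abs_nonneg k, sq_abs k]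
  have hmem : ∀ x ∈ Metric.ball k ((1 - |k|)/2), x^2 < 1 :=
    fun x hx => lt_trans (ball_sq_lt hk hx) hr1
  have key := intervalIntegral.hasDerivAt_integral_of_dominated_loc_of_deriv_le
    (F := fun x t => Real.sqrt (1 - x^2 * Real.sin t ^ 2))
    (F' := fun x t => -(x * Real.sin t ^ 2) / Real.sqrt (1 - x^2 * Real.sin t ^ 2))
    (x₀ := k) (a := (0:ℝ)) (b := π/2) (μ := MeasureTheory.volume)
    (bound := fun _ => r / Real.sqrt (1 - r^2)) (Metric.ball_mem_nhds k hε) ?_ ?_ ?_ ?_ ?_ ?_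
  · exact key.2
  · filter_upwards [Metric.ball_mem_nhds k hε] with x hx
    exact ((cont_sqrtw x).aestronglyMeasurable).restrict
  · exact (cont_sqrtw k).intervalIntegrable _ _
  · exact (Continuous.aestronglyMeasurable (by
      exact (continuous_const.mul (Real.continuous_sin.pow 2)).neg |>.div
        (cont_sqrtw k) (fun t => (sqrtw_pos hk2 t).ne'))).restrict
  · refine MeasureTheory.ae_of_all _ fun t _ x hx => ?_
    have hx2 : x^2 < 1 := hmem x hx
    have hs := sqrtw_pos hx2 t
    have h1r : (0:ℝ) < 1 - r^2 := by linarith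
    have habs : |x| < r := by
      have h1 : |x - k| < (1 - |k|)/2 := by simpa [Real.dist_eq] using hx
      have h2 : |x| ≤ |x - k| + |k| := by
        calc |x| = |x - k + k| := by ring_nf
          _ ≤ |x - k| + |k| := abs_add_le _ _
      simp only [hr]; linarith
    rw [Real.norm_eq_abs, abs_div, abs_neg]
    have hwr : 1 - r^2 ≤ 1 - x^2 * Real.sin t ^ 2 := by
      nlinarith [mul_le_of_le_one_right (sq_nonneg x) (Real.sin_sq_le_one t),
        sq_abs x, abs_nonneg x, habs]
    have hnum : |x * Real.sin t ^ 2| ≤ r := by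
      rw [abs_mul, abs_of_nonneg (sq_nonneg (Real.sin t))]
      nlinarith [Real.sin_sq_le_one t, abs_nonneg x, sq_nonneg (Real.sin t)]
    have hden : Real.sqrt (1 - r^2) ≤ |Real.sqrt (1 - x^2 * Real.sin t ^ 2)| := by
      rw [abs_of_nonneg hs.le]
      exact Real.sqrt_le_sqrt hwr
    exact div_le_div₀ hrpos.le hnum (by positivity) hden
  · exact (continuous_const.intervalIntegrable _ _)
  · refine MeasureTheory.ae_of_all _ fun t _ x hx => hasDerivAt_sqrtw (hmem x hx) t

end deriv

section formulas

lemma hasDerivAt_F {k : ℝ} (hk : k^2 < 1) (t : ℝ) :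
    HasDerivAt (fun t : ℝ => Real.sin t * Real.cos t / Real.sqrt (1 - k^2 * Real.sin t ^ 2))
      ((Real.cos t ^ 2 - Real.sin t ^ 2 + k^2 * Real.sin t ^ 4) /
        ((1 - k^2 * Real.sin t ^ 2) * Real.sqrt (1 - k^2 * Real.sin t ^ 2))) t := by
  have hw := wpos hk t
  have hs := sqrtw_pos hk t
  have hN : HasDerivAt (fun t : ℝ => Real.sin t * Real.cos t)
      (Real.cos t ^ 2 - Real.sin t ^ 2) t := by
    have := (Real.hasDerivAt_sin t).fun_mul (Real.hasDerivAt_cos t)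
    refine this.congr_deriv (Eq.symm ?_); ring
  have hwt : HasDerivAt (fun t : ℝ => 1 - k^2 * Real.sin t ^ 2)
      (-(k^2 * (2 * Real.sin t * Real.cos t))) t := by
    have h1 : HasDerivAt (fun t : ℝ => Real.sin t ^ 2)
        (2 * Real.sin t * Real.cos t) t := by
      have := (Real.hasDerivAt_sin t).fun_pow 2
      refine this.congr_deriv (Eq.symm ?_); ring
    simpa using (h1.const_mul (k^2)).const_sub 1
  have hD := hwt.sqrt hw.ne'
  have hF := hN.fun_div hD hs.ne'
  refine hF.congr_deriv (Eq.symm ?_)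
  have comm : 1 - Real.sin t ^ 2 * k^2 = 1 - k^2 * Real.sin t ^ 2 := by ring
  have h2 : Real.sqrt (1 - k^2 * Real.sin t ^ 2) ^ 2
      = 1 - k^2 * Real.sin t ^ 2 := Real.sq_sqrt hw.le
  have h3 : Real.sqrt (1 - k^2 * Real.sin t ^ 2) ^ 3
      = (1 - k^2 * Real.sin t ^ 2) * Real.sqrt (1 - k^2 * Real.sin t ^ 2) := by
    rw [pow_succ, Real.sq_sqrt hw.le]
  have h2' : Real.sqrt (1 - Real.sin t ^ 2 * k^2) ^ 2
      = 1 - Real.sin t ^ 2 * k^2 := by rw [comm]; exact h2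
  have h3' : Real.sqrt (1 - Real.sin t ^ 2 * k^2) ^ 3
      = (1 - Real.sin t ^ 2 * k^2) * Real.sqrt (1 - Real.sin t ^ 2 * k^2) := by
    rw [comm]; exact h3
  rw [Real.sq_sqrt hw.le]
  field_simp
  ring_nf
  try simp only [h2, h3, h2', h3']
  try ring
  try ring_nf

lemma I3_eq {k : ℝ} (hk : k^2 < 1) :
    (1 - k^2) * ∫ t in (0:ℝ)..(π/2),
      1 / ((1 - k^2 * Real.sin t ^ 2) * Real.sqrt (1 - k^2 * Real.sin t ^ 2)) = E k := by
  have contg : Continuous fun t : ℝ =>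
      (Real.cos t ^ 2 - Real.sin t ^ 2 + k^2 * Real.sin t ^ 4) /
        ((1 - k^2 * Real.sin t ^ 2) * Real.sqrt (1 - k^2 * Real.sin t ^ 2)) := by
    apply Continuous.div
    · continuity
    · exact (contw k).mul (cont_sqrtw k)
    · exact fun t => (mul_pos (wpos hk t) (sqrtw_pos hk t)).ne'
  have hFTC := intervalIntegral.integral_eq_sub_of_hasDerivAt (a := (0:ℝ)) (b := π/2)
    (f := fun t : ℝ => Real.sin t * Real.cos t / Real.sqrt (1 - k^2 * Real.sin t ^ 2))
    (fun t _ => hasDerivAt_F hk t) (contg.intervalIntegrable _ _)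
  have hzero : (∫ t in (0:ℝ)..(π/2),
      (Real.cos t ^ 2 - Real.sin t ^ 2 + k^2 * Real.sin t ^ 4) /
        ((1 - k^2 * Real.sin t ^ 2) * Real.sqrt (1 - k^2 * Real.sin t ^ 2))) = 0 := by
    rw [hFTC]; simp
  have key : ∀ t : ℝ, (1 - k^2) *
      (1 / ((1 - k^2 * Real.sin t ^ 2) * Real.sqrt (1 - k^2 * Real.sin t ^ 2)))
      = Real.sqrt (1 - k^2 * Real.sin t ^ 2) - k^2 *
        ((Real.cos t ^ 2 - Real.sin t ^ 2 + k^2 * Real.sin t ^ 4) /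
          ((1 - k^2 * Real.sin t ^ 2) * Real.sqrt (1 - k^2 * Real.sin t ^ 2))) := by
    intro t
    have hw := wpos hk t
    have hs := sqrtw_pos hk t
    have hss : Real.sqrt (1 - k^2 * Real.sin t ^ 2) * Real.sqrt (1 - k^2 * Real.sin t ^ 2)
        = 1 - k^2 * Real.sin t ^ 2 := Real.mul_self_sqrt hw.le
    rw [Real.cos_sq']
    have comm : 1 - Real.sin t ^ 2 * k^2 = 1 - k^2 * Real.sin t ^ 2 := by ring
    have h2 : Real.sqrt (1 - k^2 * Real.sin t ^ 2) ^ 2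
        = 1 - k^2 * Real.sin t ^ 2 := Real.sq_sqrt hw.le
    have h3 : Real.sqrt (1 - k^2 * Real.sin t ^ 2) ^ 3
        = (1 - k^2 * Real.sin t ^ 2) * Real.sqrt (1 - k^2 * Real.sin t ^ 2) := by
      rw [pow_succ, Real.sq_sqrt hw.le]
    have h2' : Real.sqrt (1 - Real.sin t ^ 2 * k^2) ^ 2
        = 1 - Real.sin t ^ 2 * k^2 := by rw [comm]; exact h2
    have h3' : Real.sqrt (1 - Real.sin t ^ 2 * k^2) ^ 3
        = (1 - Real.sin t ^ 2 * k^2) * Real.sqrt (1 - Real.sin t ^ 2 * k^2) := by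
      rw [comm]; exact h3
    field_simp
    ring_nf
    try simp only [h2, h3, h2', h3']
    try ring
    try ring_nf
  calc (1 - k^2) * ∫ t in (0:ℝ)..(π/2),
        1 / ((1 - k^2 * Real.sin t ^ 2) * Real.sqrt (1 - k^2 * Real.sin t ^ 2))
      = ∫ t in (0:ℝ)..(π/2), (1 - k^2) *
        (1 / ((1 - k^2 * Real.sin t ^ 2) * Real.sqrt (1 - k^2 * Real.sin t ^ 2))) := by
        rw [intervalIntegral.integral_const_mul]
    _ = ∫ t in (0:ℝ)..(π/2), (Real.sqrt (1 - k^2 * Real.sin t ^ 2) - k^2 *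
        ((Real.cos t ^ 2 - Real.sin t ^ 2 + k^2 * Real.sin t ^ 4) /
          ((1 - k^2 * Real.sin t ^ 2) * Real.sqrt (1 - k^2 * Real.sin t ^ 2)))) := by
        exact intervalIntegral.integral_congr (fun t _ => key t)
    _ = E k - k^2 * ∫ t in (0:ℝ)..(π/2),
        (Real.cos t ^ 2 - Real.sin t ^ 2 + k^2 * Real.sin t ^ 4) /
          ((1 - k^2 * Real.sin t ^ 2) * Real.sqrt (1 - k^2 * Real.sin t ^ 2)) := by
        rw [intervalIntegral.integral_sub ((cont_sqrtw k).intervalIntegrable _ _)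
          ((continuous_const.fun_mul contg).intervalIntegrable _ _),
          intervalIntegral.integral_const_mul]
        rfl
    _ = E k := by rw [hzero]; ring

lemma hasDerivAt_E' {k : ℝ} (hk0 : 0 < k) (hk : k^2 < 1) :
    HasDerivAt E ((E k - K k) / k) k := by
  have habs : |k| < 1 := by rw [abs_of_pos hk0]; nlinarith
  have h := hasDerivAt_E habs
  convert h using 1
  have key : ∀ t : ℝ, -(k * Real.sin t ^ 2) / Real.sqrt (1 - k^2 * Real.sin t ^ 2)
      = (1/k) * Real.sqrt (1 - k^2 * Real.sin t ^ 2)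
        - (1/k) * (1 / Real.sqrt (1 - k^2 * Real.sin t ^ 2)) := by
    intro t
    have hw := wpos hk t
    have hs := sqrtw_pos hk t
    have hss : Real.sqrt (1 - k^2 * Real.sin t ^ 2) * Real.sqrt (1 - k^2 * Real.sin t ^ 2)
        = 1 - k^2 * Real.sin t ^ 2 := Real.mul_self_sqrt hw.le
    have comm : 1 - Real.sin t ^ 2 * k^2 = 1 - k^2 * Real.sin t ^ 2 := by ring
    have h2 : Real.sqrt (1 - k^2 * Real.sin t ^ 2) ^ 2
        = 1 - k^2 * Real.sin t ^ 2 := Real.sq_sqrt hw.le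
    have h3 : Real.sqrt (1 - k^2 * Real.sin t ^ 2) ^ 3
        = (1 - k^2 * Real.sin t ^ 2) * Real.sqrt (1 - k^2 * Real.sin t ^ 2) := by
      rw [pow_succ, Real.sq_sqrt hw.le]
    have h2' : Real.sqrt (1 - Real.sin t ^ 2 * k^2) ^ 2
        = 1 - Real.sin t ^ 2 * k^2 := by rw [comm]; exact h2
    have h3' : Real.sqrt (1 - Real.sin t ^ 2 * k^2) ^ 3
        = (1 - Real.sin t ^ 2 * k^2) * Real.sqrt (1 - Real.sin t ^ 2 * k^2) := by
      rw [comm]; exact h3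
    field_simp
    ring_nf
    try simp only [h2, h3, h2', h3']
    try ring
    try ring_nf
  rw [intervalIntegral.integral_congr (fun t _ => key t),
    intervalIntegral.integral_sub
      ((continuous_const.fun_mul (cont_sqrtw k)).intervalIntegrable _ _)
      ((continuous_const.fun_mul (cont_inv_sqrtw hk)).intervalIntegrable _ _),
    intervalIntegral.integral_const_mul, intervalIntegral.integral_const_mul]
  show (E k - K k) / k = 1/k * E k - 1/k * K k
  ring

lemma hasDerivAt_K' {k : ℝ} (hk0 : 0 < k) (hk : k^2 < 1) :
    HasDerivAt K ((E k - (1 - k^2) * K k) / (k * (1 - k^2))) k := by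
  have habs : |k| < 1 := by rw [abs_of_pos hk0]; nlinarith
  have h1k : (0:ℝ) < 1 - k^2 := by linarith
  have h := hasDerivAt_K habs
  convert h using 1
  have key : ∀ t : ℝ, k * Real.sin t ^ 2 /
      ((1 - k^2 * Real.sin t ^ 2) * Real.sqrt (1 - k^2 * Real.sin t ^ 2))
      = (1/k) * (1 / ((1 - k^2 * Real.sin t ^ 2) * Real.sqrt (1 - k^2 * Real.sin t ^ 2)))
        - (1/k) * (1 / Real.sqrt (1 - k^2 * Real.sin t ^ 2)) := by
    intro t
    have hw := wpos hk t
    have hs := sqrtw_pos hk t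
    have hss : Real.sqrt (1 - k^2 * Real.sin t ^ 2) * Real.sqrt (1 - k^2 * Real.sin t ^ 2)
        = 1 - k^2 * Real.sin t ^ 2 := Real.mul_self_sqrt hw.le
    have comm : 1 - Real.sin t ^ 2 * k^2 = 1 - k^2 * Real.sin t ^ 2 := by ring
    have h2 : Real.sqrt (1 - k^2 * Real.sin t ^ 2) ^ 2
        = 1 - k^2 * Real.sin t ^ 2 := Real.sq_sqrt hw.le
    have h3 : Real.sqrt (1 - k^2 * Real.sin t ^ 2) ^ 3
        = (1 - k^2 * Real.sin t ^ 2) * Real.sqrt (1 - k^2 * Real.sin t ^ 2) := by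
      rw [pow_succ, Real.sq_sqrt hw.le]
    have h2' : Real.sqrt (1 - Real.sin t ^ 2 * k^2) ^ 2
        = 1 - Real.sin t ^ 2 * k^2 := by rw [comm]; exact h2
    have h3' : Real.sqrt (1 - Real.sin t ^ 2 * k^2) ^ 3
        = (1 - Real.sin t ^ 2 * k^2) * Real.sqrt (1 - Real.sin t ^ 2 * k^2) := by
      rw [comm]; exact h3
    field_simp
    ring_nf
    try simp only [h2, h3, h2', h3']
    try ring
    try ring_nf
  rw [intervalIntegral.integral_congr (fun t _ => key t),
    intervalIntegral.integral_sub
      ((continuous_const.fun_mul (cont_inv_w32 hk)).intervalIntegrable _ _)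
      ((continuous_const.fun_mul (cont_inv_sqrtw hk)).intervalIntegrable _ _),
    intervalIntegral.integral_const_mul, intervalIntegral.integral_const_mul]
  have hI3 := I3_eq hk
  have : (∫ t in (0:ℝ)..(π/2),
      1 / ((1 - k^2 * Real.sin t ^ 2) * Real.sqrt (1 - k^2 * Real.sin t ^ 2)))
      = E k / (1 - k^2) := by
    field_simp at hI3 ⊢
    linarith [hI3]
  rw [this]
  show (E k - (1 - k^2) * K k) / (k * (1 - k^2)) = 1/k * (E k / (1 - k^2)) - 1/k * K k
  field_simp

end formulas

section iota

lemma hasDerivAt_iota2 {k : ℝ} (hk0 : 0 < k) (hk : k^2 < 1) :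
    HasDerivAt ι₂ (k * E k / (1 - k^2)) k := by
  have h := (hasDerivAt_K' hk0 hk).fun_sub (hasDerivAt_E' hk0 hk)
  have heq : ι₂ = fun x => K x - E x := rfl
  rw [heq]
  refine h.congr_deriv (Eq.symm ?_)
  have h1k : (0:ℝ) < 1 - k^2 := by nlinarith
  field_simp
  ring

lemma hasDerivAt_iota1 {k : ℝ} (hk0 : 0 < k) (hk : k^2 < 1) :
    HasDerivAt ι₁ (((1 - 2*k^2) * E k - (1 - k^2) * K k) / (k * (1 - k^2))) k := by
  have h := ((hasDerivAt_E' hk0 hk).const_mul 2).fun_sub (hasDerivAt_K' hk0 hk)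
  have heq : ι₁ = fun x => 2 * E x - K x := rfl
  rw [heq]
  refine h.congr_deriv (Eq.symm ?_)
  have h1k : (0:ℝ) < 1 - k^2 := by nlinarith
  field_simp
  ring

lemma contAt_E {k : ℝ} (h : |k| < 1) : ContinuousAt E k :=
  (hasDerivAt_E h).continuousAt

lemma contAt_K {k : ℝ} (h : |k| < 1) : ContinuousAt K k :=
  (hasDerivAt_K h).continuousAt

lemma contAt_iota1 {k : ℝ} (h : |k| < 1) : ContinuousAt ι₁ k := by
  have : ι₁ = fun x => 2 * E x - K x := rfl
  rw [this]
  exact ((continuousAt_const.mul (contAt_E h)).sub (contAt_K h))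

lemma contAt_iota2 {k : ℝ} (h : |k| < 1) : ContinuousAt ι₂ k := by
  have : ι₂ = fun x => K x - E x := rfl
  rw [this]
  exact (contAt_K h).sub (contAt_E h)

lemma K_zero : K 0 = π/2 := by
  have key : ∀ t ∈ uIcc (0:ℝ) (π/2),
      1 / Real.sqrt (1 - (0:ℝ)^2 * Real.sin t ^ 2) = 1 := by
    intro t _; norm_num
  unfold K
  rw [intervalIntegral.integral_congr key]
  simp

lemma E_zero : E 0 = π/2 := by
  have key : ∀ t ∈ uIcc (0:ℝ) (π/2),
      Real.sqrt (1 - (0:ℝ)^2 * Real.sin t ^ 2) = 1 := by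
    intro t _; norm_num
  unfold E
  rw [intervalIntegral.integral_congr key]
  simp

lemma abs_lt_one_of_mem {k : ℝ} (h0 : 0 ≤ k) (h1 : k < 1) : |k| < 1 := by
  rw [abs_of_nonneg h0]; exact h1

lemma iota2_strictMono : StrictMonoOn ι₂ (Ico 0 1) := by
  apply strictMonoOn_of_deriv_pos (convex_Ico 0 1)
  · intro x hx
    exact (contAt_iota2 (abs_lt_one_of_mem hx.1 hx.2)).continuousWithinAt
  · intro x hx
    rw [interior_Ico] at hx
    have hx2 : x^2 < 1 := by nlinarith [hx.1, hx.2]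
    rw [(hasDerivAt_iota2 hx.1 hx2).deriv]
    have := E_pos hx2
    have h1x : (0:ℝ) < 1 - x^2 := by linarith
    exact div_pos (mul_pos hx.1 this) h1x

lemma iota2_zero : ι₂ 0 = 0 := by
  show K 0 - E 0 = 0
  rw [K_zero, E_zero]; ring

lemma iota2_pos {k : ℝ} (hk0 : 0 < k) (hk1 : k < 1) : 0 < ι₂ k := by
  have := iota2_strictMono (left_mem_Ico.2 one_pos) ⟨hk0.le, hk1⟩ hk0
  rwa [iota2_zero] at this

lemma E_lt_K {k : ℝ} (hk0 : 0 < k) (hk1 : k < 1) : E k < K k := by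
  have := iota2_pos hk0 hk1
  have h : ι₂ k = K k - E k := rfl
  rw [h] at this; linarith

lemma iota1_strictAnti : StrictAntiOn ι₁ (Ico 0 1) := by
  apply strictAntiOn_of_deriv_neg (convex_Ico 0 1)
  · intro x hx
    exact (contAt_iota1 (abs_lt_one_of_mem hx.1 hx.2)).continuousWithinAt
  · intro x hx
    rw [interior_Ico] at hx
    have hx2 : x^2 < 1 := by nlinarith [hx.1, hx.2]
    rw [(hasDerivAt_iota1 hx.1 hx2).deriv]
    have hE := E_pos hx2
    have hEK := E_lt_K hx.1 hx.2
    have h1x : (0:ℝ) < 1 - x^2 := by linarith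
    apply div_neg_of_neg_of_pos
    · nlinarith [mul_pos h1x (sub_pos.2 hEK), mul_pos (mul_pos hx.1 hx.1) hE]
    · exact mul_pos hx.1 h1x

end iota

section Ypart

lemma sqrt_tendsto_atTop : Tendsto Real.sqrt atTop atTop := by
  apply tendsto_atTop_atTop.2
  intro b
  refine ⟨b^2, fun a ha => ?_⟩
  calc b ≤ |b| := le_abs_self b
    _ = Real.sqrt (b^2) := (Real.sqrt_sq_eq_abs b).symm
    _ ≤ Real.sqrt a := Real.sqrt_le_sqrt ha

variable {k₀ : ℝ}

lemma iota1_k0 (hroot : 2 * E k₀ - K k₀ = 0) : ι₁ k₀ = 0 := hroot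

lemma iota1_pos (hk₀ : k₀ ∈ Set.Ioo (0:ℝ) 1) (hroot : 2 * E k₀ - K k₀ = 0)
    {k : ℝ} (hk : k ∈ Ioo 0 k₀) : 0 < ι₁ k := by
  have h := iota1_strictAnti (a := k) (b := k₀)
    ⟨hk.1.le, lt_trans hk.2 hk₀.2⟩ ⟨le_trans hk.1.le hk.2.le, hk₀.2⟩ hk.2
  rw [iota1_k0 hroot] at h
  exact h

lemma sq_lt_one_of_mem (hk₀ : k₀ ∈ Set.Ioo (0:ℝ) 1) {k : ℝ} (hk : k ∈ Ioo 0 k₀) : k^2 < 1 := by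
  have h1 : k < 1 := lt_trans hk.2 hk₀.2
  nlinarith [hk.1]

lemma hasDerivAt_g {k : ℝ} (hk0 : 0 < k) (hk2 : k^2 < 1) :
    HasDerivAt (fun k => 2 * ι₁ k / k) (-(2 * E k) / ((1 - k^2) * k^2)) k := by
  have h := ((hasDerivAt_iota1 hk0 hk2).const_mul 2).fun_div (hasDerivAt_id' (x := k)) hk0.ne'
  refine h.congr_deriv (Eq.symm ?_)
  have h1k : (0:ℝ) < 1 - k^2 := by linarith
  have hi : ι₁ k = 2 * E k - K k := rfl
  rw [hi]
  field_simp
  ring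

lemma contAt_g {k : ℝ} (hk0 : k ≠ 0) (hk2 : |k| < 1) :
    ContinuousAt (fun k => 2 * ι₁ k / k) k :=
  (continuousAt_const.mul (contAt_iota1 hk2)).div continuousAt_id hk0

lemma g_pos (hk₀ : k₀ ∈ Set.Ioo (0:ℝ) 1) (hroot : 2 * E k₀ - K k₀ = 0) {k : ℝ} (hk : k ∈ Ioo 0 k₀) : 0 < 2 * ι₁ k / k :=
  div_pos (by linarith [iota1_pos hk₀ hroot hk]) hk.1

lemma g_strictAnti (hk₀ : k₀ ∈ Set.Ioo (0:ℝ) 1) : StrictAntiOn (fun k => 2 * ι₁ k / k) (Ioo 0 k₀) := by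
  apply strictAntiOn_of_deriv_neg (convex_Ioo 0 k₀)
  · intro x hx
    exact (contAt_g hx.1.ne' (abs_lt_one_of_mem hx.1.le
      (lt_trans hx.2 hk₀.2))).continuousWithinAt
  · intro x hx
    rw [interior_Ioo] at hx
    have hx2 : x^2 < 1 := sq_lt_one_of_mem hk₀ hx
    rw [(hasDerivAt_g hx.1 hx2).deriv]
    apply div_neg_of_neg_of_pos
    · linarith [E_pos hx2]
    · have h1 : (0:ℝ) < 1 - x^2 := by linarith
      exact mul_pos h1 (pow_pos hx.1 2)

lemma Y12_strictAnti (hk₀ : k₀ ∈ Set.Ioo (0:ℝ) 1) (hroot : 2 * E k₀ - K k₀ = 0) : StrictAntiOn Y12 (Ioo 0 k₀) := by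
  intro a ha b hb hab
  have h := g_strictAnti hk₀ ha hb hab
  exact Real.sqrt_lt_sqrt (g_pos hk₀ hroot hb).le h

lemma Y12_pos (hk₀ : k₀ ∈ Set.Ioo (0:ℝ) 1) (hroot : 2 * E k₀ - K k₀ = 0) {k : ℝ} (hk : k ∈ Ioo 0 k₀) : 0 < Y12 k :=
  Real.sqrt_pos.2 (g_pos hk₀ hroot hk)

lemma Y12_tendsto_zero_right : Tendsto Y12 (𝓝[>] (0:ℝ)) atTop := by
  have h1 : Tendsto (fun k => 2 * ι₁ k) (𝓝[>] (0:ℝ)) (𝓝 π) := by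
    have hc : ContinuousAt (fun k => 2 * ι₁ k) 0 :=
      continuousAt_const.mul (contAt_iota1 (by norm_num))
    have hv : 2 * ι₁ 0 = π := by
      have : ι₁ 0 = 2 * E 0 - K 0 := rfl
      rw [this, E_zero, K_zero]; ring
    have := hc.tendsto
    rw [hv] at this
    exact this.mono_left nhdsWithin_le_nhds
  have h2 : Tendsto (fun k : ℝ => k⁻¹) (𝓝[>] (0:ℝ)) atTop := tendsto_inv_nhdsGT_zero
  have h3 : Tendsto (fun k => 2 * ι₁ k / k) (𝓝[>] (0:ℝ)) atTop := by
    have := h1.pos_mul_atTop Real.pi_pos h2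
    simpa [div_eq_mul_inv] using this
  exact sqrt_tendsto_atTop.comp h3

lemma Y12_tendsto_k0 (hk₀ : k₀ ∈ Set.Ioo (0:ℝ) 1) (hroot : 2 * E k₀ - K k₀ = 0) : Tendsto Y12 (𝓝[<] k₀) (𝓝 0) := by
  have hc : ContinuousAt (fun k => 2 * ι₁ k / k) k₀ :=
    contAt_g hk₀.1.ne' (abs_lt_one_of_mem hk₀.1.le hk₀.2)
  have hY : ContinuousAt Y12 k₀ := by
    have : Y12 = fun k => Real.sqrt (2 * ι₁ k / k) := rfl
    rw [this]
    exact Real.continuous_sqrt.continuousAt.comp hc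
  have hv : Y12 k₀ = 0 := by
    have : Y12 k₀ = Real.sqrt (2 * ι₁ k₀ / k₀) := rfl
    rw [this, iota1_k0 hroot]
    simp
  have := hY.tendsto
  rw [hv] at this
  exact this.mono_left nhdsWithin_le_nhds

end Ypart

section Wpart

noncomputable def Afun (k : ℝ) : ℝ := ι₂ k + 4 * k^2 * ι₁ k
noncomputable def Bfun (k : ℝ) : ℝ := 2 * k * ι₁ k
noncomputable def Vfun (k : ℝ) : ℝ := (Afun k)^2 / (9 * (Bfun k)^3)

lemma rpow32 {x : ℝ} (hx : 0 ≤ x) : x ^ ((3:ℝ)/2) = Real.sqrt (x^3) := by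
  rw [Real.sqrt_eq_rpow, ← Real.rpow_natCast x 3, ← Real.rpow_mul hx]
  norm_num

lemma sqrt_nine : Real.sqrt 9 = 3 := by
  rw [show (9:ℝ) = 3^2 by norm_num, Real.sqrt_sq (by norm_num)]

lemma W12_eq {k : ℝ} (hB : 0 ≤ Bfun k) :
    W12 k = Afun k / (3 * Real.sqrt ((Bfun k)^3)) := by
  have h : W12 k = Afun k / (3 * (Bfun k) ^ ((3:ℝ)/2)) := rfl
  rw [h, rpow32 hB]

lemma W12_eq_sqrtV {k : ℝ} (hA : 0 ≤ Afun k) (hB : 0 < Bfun k) :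
    W12 k = Real.sqrt (Vfun k) := by
  rw [W12_eq hB.le]
  have h : Vfun k = (Afun k)^2 / (9 * (Bfun k)^3) := rfl
  rw [h, Real.sqrt_div' _ (by positivity), Real.sqrt_sq hA,
    Real.sqrt_mul (by norm_num : (0:ℝ) ≤ 9), sqrt_nine]

lemma hasDerivAt_A {k : ℝ} (hk0 : 0 < k) (hk2 : k^2 < 1) :
    HasDerivAt Afun (3 * k * (4 * ι₁ k - E k / (1 - k^2))) k := by
  have h := (hasDerivAt_iota2 hk0 hk2).fun_add
    (((hasDerivAt_pow 2 k).const_mul 4).fun_mul (hasDerivAt_iota1 hk0 hk2))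
  have heq : Afun = fun k => ι₂ k + 4 * k^2 * ι₁ k := rfl
  rw [heq]
  refine h.congr_deriv (Eq.symm ?_)
  have h1k : (0:ℝ) < 1 - k^2 := by linarith
  have hi1 : ι₁ k = 2 * E k - K k := rfl
  have hi2 : ι₂ k = K k - E k := rfl
  rw [hi1]
  show _ = _ + (4 * ((2:ℕ) * k ^ (2 - 1)) * (2 * E k - K k) + _)
  norm_num
  field_simp
  ring

lemma hasDerivAt_B {k : ℝ} (hk0 : 0 < k) (hk2 : k^2 < 1) :
    HasDerivAt Bfun (2 * (2 * ι₁ k - E k / (1 - k^2))) k := by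
  have h := ((hasDerivAt_id' (x := k)).const_mul 2).fun_mul (hasDerivAt_iota1 hk0 hk2)
  have heq : Bfun = fun k => 2 * k * ι₁ k := rfl
  rw [heq]
  refine h.congr_deriv (Eq.symm ?_)
  have h1k : (0:ℝ) < 1 - k^2 := by linarith
  have hi1 : ι₁ k = 2 * E k - K k := rfl
  rw [hi1]
  field_simp
  ring

lemma A_pos {k₀ k : ℝ} (hk₀ : k₀ ∈ Set.Ioo (0:ℝ) 1) (hroot : 2 * E k₀ - K k₀ = 0)
    (hk : k ∈ Ioo 0 k₀) : 0 < Afun k := by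
  have h1 := iota2_pos hk.1 (lt_trans hk.2 hk₀.2)
  have h2 := iota1_pos hk₀ hroot hk
  have h : Afun k = ι₂ k + 4 * k^2 * ι₁ k := rfl
  rw [h]
  nlinarith [mul_pos (pow_pos hk.1 2) h2]

lemma B_pos {k₀ k : ℝ} (hk₀ : k₀ ∈ Set.Ioo (0:ℝ) 1) (hroot : 2 * E k₀ - K k₀ = 0)
    (hk : k ∈ Ioo 0 k₀) : 0 < Bfun k := by
  have h2 := iota1_pos hk₀ hroot hk
  have h : Bfun k = 2 * k * ι₁ k := rfl
  rw [h]
  nlinarith [mul_pos hk.1 h2]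

lemma hasDerivAt_V {k : ℝ} (hk0 : 0 < k) (hk2 : k^2 < 1) (hB : Bfun k ≠ 0) :
    HasDerivAt Vfun
      ((Afun k * (2 * (3 * k * (4 * ι₁ k - E k / (1 - k^2))) * Bfun k
        - 3 * Afun k * (2 * (2 * ι₁ k - E k / (1 - k^2))))) / (9 * (Bfun k)^4)) k := by
  have hA := hasDerivAt_A hk0 hk2
  have hB' := hasDerivAt_B hk0 hk2
  have h := (hA.fun_pow 2).fun_div ((hB'.fun_pow 3).const_mul 9)
    (mul_ne_zero (by norm_num) (pow_ne_zero 3 hB))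
  have heq : Vfun = fun x => (Afun x)^2 / (9 * (Bfun x)^3) := rfl
  rw [heq]
  refine h.congr_deriv (Eq.symm ?_)
  have h1k : (0:ℝ) < 1 - k^2 := by linarith
  push_cast
  field_simp

lemma key_pos {k₀ k : ℝ} (hk₀ : k₀ ∈ Set.Ioo (0:ℝ) 1) (hroot : 2 * E k₀ - K k₀ = 0)
    (hk : k ∈ Ioo 0 k₀) :
    0 < 2 * (3 * k * (4 * ι₁ k - E k / (1 - k^2))) * Bfun k
      - 3 * Afun k * (2 * (2 * ι₁ k - E k / (1 - k^2))) := by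
  have hk2 : k^2 < 1 := sq_lt_one_of_mem hk₀ hk
  have h1k : (0:ℝ) < 1 - k^2 := by linarith
  have hE := E_pos hk2
  have hEK := EK_ineq hk2
  have hι₁ := iota1_pos hk₀ hroot hk
  have hι₂ := iota2_pos hk.1 (lt_trans hk.2 hk₀.2)
  have hP : (2 * (3 * k * (4 * ι₁ k - E k / (1 - k^2))) * Bfun k
      - 3 * Afun k * (2 * (2 * ι₁ k - E k / (1 - k^2)))) * (1 - k^2)
      = 6 * (2 * ι₁ k * (k^2 * E k - (1 - k^2) * ι₂ k) + ι₂ k * E k) := by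
    have hA : Afun k = ι₂ k + 4 * k^2 * ι₁ k := rfl
    have hB : Bfun k = 2 * k * ι₁ k := rfl
    rw [hA, hB]
    field_simp
    ring
  have hnn : 0 ≤ k^2 * E k - (1 - k^2) * ι₂ k := by
    have hi2 : ι₂ k = K k - E k := rfl
    rw [hi2]
    nlinarith
  have hPpos : 0 < (2 * (3 * k * (4 * ι₁ k - E k / (1 - k^2))) * Bfun k
      - 3 * Afun k * (2 * (2 * ι₁ k - E k / (1 - k^2)))) * (1 - k^2) := by
    rw [hP]
    nlinarith [mul_nonneg (by linarith : (0:ℝ) ≤ 2 * ι₁ k) hnn, mul_pos hι₂ hE]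
  nlinarith [hPpos]

lemma V_strictMono {k₀ : ℝ} (hk₀ : k₀ ∈ Set.Ioo (0:ℝ) 1) (hroot : 2 * E k₀ - K k₀ = 0) :
    StrictMonoOn Vfun (Ioo 0 k₀) := by
  apply strictMonoOn_of_deriv_pos (convex_Ioo 0 k₀)
  · intro x hx
    have hx2 : x^2 < 1 := sq_lt_one_of_mem hk₀ hx
    exact (hasDerivAt_V hx.1 hx2 (B_pos hk₀ hroot hx).ne').continuousAt.continuousWithinAt
  · intro x hx
    rw [interior_Ioo] at hx
    have hx2 : x^2 < 1 := sq_lt_one_of_mem hk₀ hx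
    rw [(hasDerivAt_V hx.1 hx2 (B_pos hk₀ hroot hx).ne').deriv]
    exact div_pos (mul_pos (A_pos hk₀ hroot hx) (key_pos hk₀ hroot hx))
      (by nlinarith [pow_pos (B_pos hk₀ hroot hx) 4])
  
lemma W12_strictMono {k₀ : ℝ} (hk₀ : k₀ ∈ Set.Ioo (0:ℝ) 1) (hroot : 2 * E k₀ - K k₀ = 0) :
    StrictMonoOn W12 (Ioo 0 k₀) := by
  intro a ha b hb hab
  rw [W12_eq_sqrtV (A_pos hk₀ hroot ha).le (B_pos hk₀ hroot ha),
    W12_eq_sqrtV (A_pos hk₀ hroot hb).le (B_pos hk₀ hroot hb)]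
  apply Real.sqrt_lt_sqrt
  · have h : Vfun a = (Afun a)^2 / (9 * (Bfun a)^3) := rfl
    rw [h]
    exact le_of_lt (div_pos (pow_pos (A_pos hk₀ hroot ha) 2)
      (by nlinarith [pow_pos (B_pos hk₀ hroot ha) 3]))
  · exact V_strictMono hk₀ hroot ha hb hab

lemma W12_pos {k₀ k : ℝ} (hk₀ : k₀ ∈ Set.Ioo (0:ℝ) 1) (hroot : 2 * E k₀ - K k₀ = 0)
    (hk : k ∈ Ioo 0 k₀) : 0 < W12 k := by
  rw [W12_eq (B_pos hk₀ hroot hk).le]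
  have hB := B_pos hk₀ hroot hk
  have hA := A_pos hk₀ hroot hk
  exact div_pos hA (mul_pos (by norm_num) (Real.sqrt_pos.2 (pow_pos hB 3)))

end Wpart

section Wlimits

lemma contAt_A {k : ℝ} (h : |k| < 1) : ContinuousAt Afun k := by
  have heq : Afun = fun x => ι₂ x + 4 * x^2 * ι₁ x := rfl
  rw [heq]
  exact (contAt_iota2 h).add
    ((continuousAt_const.mul (continuousAt_id.pow 2)).mul
      (contAt_iota1 h))

lemma contAt_B {k : ℝ} (h : |k| < 1) : ContinuousAt Bfun k := by
  have heq : Bfun = fun x => 2 * x * ι₁ x := rfl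
  rw [heq]
  exact ((continuousAt_const.mul continuousAt_id).mul (contAt_iota1 h))

lemma W12_tendsto_atTop {k₀ : ℝ} (hk₀ : k₀ ∈ Set.Ioo (0:ℝ) 1)
    (hroot : 2 * E k₀ - K k₀ = 0) : Tendsto W12 (𝓝[<] k₀) atTop := by
  have habs : |k₀| < 1 := abs_lt_one_of_mem hk₀.1.le hk₀.2
  have hIoo : Ioo 0 k₀ ∈ 𝓝[<] k₀ := Ioo_mem_nhdsLT hk₀.1
  have hAk0 : Afun k₀ = ι₂ k₀ := by
    have h : Afun k₀ = ι₂ k₀ + 4 * k₀^2 * ι₁ k₀ := rfl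
    rw [h, iota1_k0 hroot]; ring
  have hA : Tendsto Afun (𝓝[<] k₀) (𝓝 (ι₂ k₀)) := by
    have := (contAt_A habs).tendsto
    rw [hAk0] at this
    exact this.mono_left nhdsWithin_le_nhds
  have hBk0 : Bfun k₀ = 0 := by
    have h : Bfun k₀ = 2 * k₀ * ι₁ k₀ := rfl
    rw [h, iota1_k0 hroot]; ring
  have hB : Tendsto (fun k => 3 * Real.sqrt ((Bfun k)^3)) (𝓝[<] k₀) (𝓝[>] 0) := by
    rw [tendsto_nhdsWithin_iff]
    constructor
    · have hc : ContinuousAt (fun k => 3 * Real.sqrt ((Bfun k)^3)) k₀ :=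
        continuousAt_const.mul (Real.continuous_sqrt.continuousAt.comp ((contAt_B habs).pow 3))
      have := hc.tendsto
      have hv : 3 * Real.sqrt ((Bfun k₀)^3) = 0 := by rw [hBk0]; simp
      rw [hv] at this
      exact this.mono_left nhdsWithin_le_nhds
    · filter_upwards [hIoo] with k hk
      have hBp := B_pos hk₀ hroot hk
      have : 0 < Real.sqrt ((Bfun k)^3) := Real.sqrt_pos.2 (pow_pos hBp 3)
      exact mem_Ioi.2 (by linarith)
  have hinv : Tendsto (fun k => (3 * Real.sqrt ((Bfun k)^3))⁻¹) (𝓝[<] k₀) atTop := by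
    have := hB.inv_tendsto_nhdsGT_zero
    simpa [Pi.inv_def] using this
  have hι₂pos := iota2_pos hk₀.1 hk₀.2
  have hmul := hA.pos_mul_atTop hι₂pos hinv
  apply hmul.congr'
  filter_upwards [hIoo] with k hk
  rw [W12_eq (B_pos hk₀ hroot hk).le, div_eq_mul_inv]

lemma W12_bound {k₀ k : ℝ} (hk₀ : k₀ ∈ Set.Ioo (0:ℝ) 1) (hroot : 2 * E k₀ - K k₀ = 0)
    (hk : k ∈ Ioo 0 (min k₀ (1/2))) : W12 k ≤ (5*π/3) * Real.sqrt k := by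
  have hk1 : k ∈ Ioo 0 k₀ := ⟨hk.1, lt_of_lt_of_le hk.2 (min_le_left _ _)⟩
  have hkhalf : k < 1/2 := lt_of_lt_of_le hk.2 (min_le_right _ _)
  have hk2 : k^2 < 1 := sq_lt_one_of_mem hk₀ hk1
  have h1k : (0:ℝ) < 1 - k^2 := by linarith
  have hEK := EK_ineq hk2
  have hKge := K_ge hk2
  have hKle := K_le hk2
  have hEle := E_le hk2
  have hKpos := K_pos hk2
  have hk14 : k^2 < 1/4 := by
    nlinarith [mul_lt_mul hkhalf hkhalf.le hk1.1 (by norm_num : (0:ℝ) ≤ 1/2)]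
  have hsq : (1:ℝ)/2 ≤ Real.sqrt (1 - k^2) := by
    rw [show (1:ℝ)/2 = Real.sqrt (1/4) by
      rw [show (1:ℝ)/4 = (1/2)^2 by norm_num, Real.sqrt_sq]; norm_num]
    apply Real.sqrt_le_sqrt
    nlinarith [hk14]
  -- bound on A
  have hi1 : ι₁ k = 2 * E k - K k := rfl
  have hi2 : ι₂ k = K k - E k := rfl
  have hApi : Afun k ≤ 5 * π * k^2 := by
    have hKk2 : K k ≤ π := by
      have h2 : (π/2) / Real.sqrt (1 - k^2) ≤ π := by
        rw [div_le_iff₀ (by positivity)]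
        nlinarith [Real.pi_pos]
      linarith
    have hι₂le : ι₂ k ≤ k^2 * K k := by rw [hi2]; nlinarith
    have hι₁le : ι₁ k ≤ π := by rw [hi1]; nlinarith
    have h : Afun k = ι₂ k + 4 * k^2 * ι₁ k := rfl
    rw [h]
    nlinarith [sq_nonneg k, mul_le_mul_of_nonneg_left hι₁le (by positivity : (0:ℝ) ≤ 4*k^2),
      mul_le_mul_of_nonneg_left hKk2 (sq_nonneg k)]
  -- bound on B
  have hBk : k ≤ Bfun k := by
    have hι₁ge : (1 - 2*k^2) * K k ≤ ι₁ k := by rw [hi1]; nlinarith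
    have h12 : (1:ℝ)/2 ≤ 1 - 2*k^2 := by nlinarith [hk14]
    have h : Bfun k = 2 * k * ι₁ k := rfl
    rw [h]
    have : (π/4) ≤ ι₁ k := by
      nlinarith [mul_le_mul h12 hKge (by positivity) (by nlinarith [hk14] : (0:ℝ) ≤ 1 - 2*k^2)]
    nlinarith [Real.pi_gt_three, hk.1]
  have hBpos := B_pos hk₀ hroot hk1
  have hsqrtB : k * Real.sqrt k ≤ Real.sqrt ((Bfun k)^3) := by
    have h1 : k^3 ≤ (Bfun k)^3 := pow_le_pow_left₀ hk1.1.le hBk 3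
    have h2 : Real.sqrt (k^3) = k * Real.sqrt k := by
      rw [show k^3 = k^2 * k by ring, Real.sqrt_mul (sq_nonneg k), Real.sqrt_sq hk.1.le]
    rw [← h2]
    exact Real.sqrt_le_sqrt h1
  have hkk : 0 < k * Real.sqrt k := mul_pos hk.1 (Real.sqrt_pos.2 hk.1)
  rw [W12_eq (B_pos hk₀ hroot hk1).le]
  have step1 : Afun k / (3 * Real.sqrt ((Bfun k)^3)) ≤ Afun k / (3 * (k * Real.sqrt k)) := by
    apply div_le_div_of_nonneg_left (A_pos hk₀ hroot hk1).le (by linarith)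
    linarith
  have step2 : Afun k / (3 * (k * Real.sqrt k)) ≤ (5 * π * k^2) / (3 * (k * Real.sqrt k)) :=
    (div_le_div_iff_of_pos_right (by linarith)).2 hApi
  have step3 : (5 * π * k^2) / (3 * (k * Real.sqrt k)) = (5*π/3) * Real.sqrt k := by
    have hds : k^2 / (k * Real.sqrt k) = Real.sqrt k := by
      rw [show k^2 = k * k by ring, mul_div_mul_left _ _ hk.1.ne', Real.div_sqrt]
    calc (5 * π * k^2) / (3 * (k * Real.sqrt k))
        = (5*π/3) * (k^2 / (k * Real.sqrt k)) := by ring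
      _ = (5*π/3) * Real.sqrt k := by rw [hds]
  linarith

end Wlimits

lemma W12_tendsto_zero {k₀ : ℝ} (hk₀ : k₀ ∈ Set.Ioo (0:ℝ) 1)
    (hroot : 2 * E k₀ - K k₀ = 0) : Tendsto W12 (𝓝[>] (0:ℝ)) (𝓝 0) := by
  have hm : 0 < min k₀ (1/2) := lt_min hk₀.1 (by norm_num)
  have hIoo : Ioo (0:ℝ) (min k₀ (1/2)) ∈ 𝓝[>] (0:ℝ) := Ioo_mem_nhdsGT hm
  have hh : Tendsto (fun k : ℝ => (5*π/3) * Real.sqrt k) (𝓝[>] (0:ℝ)) (𝓝 0) := by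
    have hc : ContinuousAt (fun k : ℝ => (5*π/3) * Real.sqrt k) 0 :=
      continuousAt_const.mul Real.continuous_sqrt.continuousAt
    have := hc.tendsto
    rw [show (5*π/3) * Real.sqrt 0 = 0 by simp] at this
    exact this.mono_left nhdsWithin_le_nhds
  apply tendsto_of_tendsto_of_tendsto_of_le_of_le' (g := fun _ => (0:ℝ))
    tendsto_const_nhds hh
  · filter_upwards [hIoo] with k hk
    exact (W12_pos hk₀ hroot ⟨hk.1, lt_of_lt_of_le hk.2 (min_le_left _ _)⟩).le
  · filter_upwards [hIoo] with k hk
    exact W12_bound hk₀ hroot hk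

section inverse

variable {k₀ : ℝ}

lemma contAt_Y12 {k : ℝ} (hk0 : k ≠ 0) (hk2 : |k| < 1) : ContinuousAt Y12 k := by
  have h : Y12 = fun k => Real.sqrt (2 * ι₁ k / k) := rfl
  rw [h]
  exact Real.continuous_sqrt.continuousAt.comp (contAt_g hk0 hk2)

lemma Y12_surj (hk₀ : k₀ ∈ Set.Ioo (0:ℝ) 1) (hroot : 2 * E k₀ - K k₀ = 0) :
    Y12 '' (Ioo 0 k₀) = Ioi 0 := by
  apply Subset.antisymm
  · rintro y ⟨k, hk, rfl⟩
    exact Y12_pos hk₀ hroot hk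
  · intro y hy
    rw [mem_Ioi] at hy
    have hIoo : Ioo (0:ℝ) k₀ ∈ 𝓝[>] (0:ℝ) := Ioo_mem_nhdsGT hk₀.1
    have hIoo' : Ioo (0:ℝ) k₀ ∈ 𝓝[<] k₀ := Ioo_mem_nhdsLT hk₀.1
    obtain ⟨a, hay, ha⟩ := ((Y12_tendsto_zero_right.eventually_gt_atTop y).and
      (eventually_mem_set.2 hIoo)).exists
    obtain ⟨b, hby, hb⟩ := (((Y12_tendsto_k0 hk₀ hroot).eventually_lt_const hy).and
      (eventually_mem_set.2 hIoo')).exists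
    have hab : a < b := by
      by_contra h
      push_neg at h
      rcases eq_or_lt_of_le h with h' | h'
      · rw [← h'] at hay; linarith
      · have := Y12_strictAnti hk₀ hroot hb ha h'
        linarith
    have hcont : ContinuousOn Y12 (Icc a b) := by
      intro x hx
      have hx0 : 0 < x := lt_of_lt_of_le ha.1 hx.1
      have hx1 : x < 1 := lt_of_le_of_lt hx.2 (lt_trans hb.2 hk₀.2)
      exact (contAt_Y12 hx0.ne' (abs_lt_one_of_mem hx0.le hx1)).continuousWithinAt
    have hy' : y ∈ Icc (Y12 b) (Y12 a) := ⟨hby.le, hay.le⟩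
    obtain ⟨c, hc, hcy⟩ := intermediate_value_Icc' hab.le hcont hy'
    exact ⟨c, ⟨lt_of_lt_of_le ha.1 hc.1, lt_of_le_of_lt hc.2 hb.2⟩, hcy⟩
  
end inverse

noncomputable def Wconj (k₀ : ℝ) : ℝ → ℝ :=
  fun y => W12 (Function.invFunOn Y12 (Ioo 0 k₀) y)

lemma inv_spec (hk₀ : k₀ ∈ Set.Ioo (0:ℝ) 1) (hroot : 2 * E k₀ - K k₀ = 0)
    {y : ℝ} (hy : y ∈ Ioi (0:ℝ)) :
    Function.invFunOn Y12 (Ioo 0 k₀) y ∈ Ioo 0 k₀ ∧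
      Y12 (Function.invFunOn Y12 (Ioo 0 k₀) y) = y := by
  have hmem : y ∈ Y12 '' (Ioo 0 k₀) := by rw [Y12_surj hk₀ hroot]; exact hy
  obtain ⟨k, hk, hky⟩ := hmem
  exact ⟨Function.invFunOn_mem ⟨k, hk, hky⟩, Function.invFunOn_eq ⟨k, hk, hky⟩⟩

lemma Wconj_comp (hk₀ : k₀ ∈ Set.Ioo (0:ℝ) 1) (hroot : 2 * E k₀ - K k₀ = 0)
    {k : ℝ} (hk : k ∈ Ioo 0 k₀) : Wconj k₀ (Y12 k) = W12 k := by
  have hmem : Y12 k ∈ Ioi (0:ℝ) := Y12_pos hk₀ hroot hk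
  obtain ⟨h1, h2⟩ := inv_spec hk₀ hroot hmem
  have heq := (Y12_strictAnti hk₀ hroot).injOn h1 hk h2
  show W12 _ = W12 k
  rw [heq]

lemma invY_lt (hk₀ : k₀ ∈ Set.Ioo (0:ℝ) 1) (hroot : 2 * E k₀ - K k₀ = 0)
    {y c : ℝ} (hy : y ∈ Ioi (0:ℝ)) (hc : c ∈ Ioo 0 k₀) (h : Y12 c < y) :
    Function.invFunOn Y12 (Ioo 0 k₀) y < c := by
  obtain ⟨hm, he⟩ := inv_spec hk₀ hroot hy
  by_contra hcon
  push_neg at hcon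
  rcases eq_or_lt_of_le hcon with h' | h'
  · rw [h', he] at h; exact lt_irrefl _ h
  · have := Y12_strictAnti hk₀ hroot hc hm h'
    rw [he] at this; linarith

lemma invY_gt (hk₀ : k₀ ∈ Set.Ioo (0:ℝ) 1) (hroot : 2 * E k₀ - K k₀ = 0)
    {y c : ℝ} (hy : y ∈ Ioi (0:ℝ)) (hc : c ∈ Ioo 0 k₀) (h : y < Y12 c) :
    c < Function.invFunOn Y12 (Ioo 0 k₀) y := by
  obtain ⟨hm, he⟩ := inv_spec hk₀ hroot hy
  by_contra hcon
  push_neg at hcon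
  rcases eq_or_lt_of_le hcon with h' | h'
  · rw [← h', he] at h; exact lt_irrefl _ h
  · have := Y12_strictAnti hk₀ hroot hm hc h'
    rw [he] at this; linarith


/-- `Y12` strictly decreases on `(0, k₀)` from `+∞` to `0`, `W12` strictly increases on
`(0, k₀)` from `0` to `+∞`, and the parametric curve `{(Y12(k), W12(k)) : k ∈ (0, k₀)}`
is the graph of a positive function `W_conj^{21}` strictly decreasing from `+∞` to `0`
on `(0, ∞)`. -/
theorem curve_CI_graph (k₀ : ℝ) (hk₀ : k₀ ∈ Set.Ioo (0:ℝ) 1)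
    (hroot : 2 * E k₀ - K k₀ = 0) :
    StrictAntiOn Y12 (Set.Ioo 0 k₀) ∧
    Tendsto Y12 (nhdsWithin 0 (Set.Ioi 0)) atTop ∧
    Tendsto Y12 (nhdsWithin k₀ (Set.Iio k₀)) (nhds 0) ∧
    StrictMonoOn W12 (Set.Ioo 0 k₀) ∧
    Tendsto W12 (nhdsWithin 0 (Set.Ioi 0)) (nhds 0) ∧
    Tendsto W12 (nhdsWithin k₀ (Set.Iio k₀)) atTop ∧
    ∃ Wconj : ℝ → ℝ,
      (∀ Y ∈ Set.Ioi (0:ℝ), 0 < Wconj Y) ∧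
      StrictAntiOn Wconj (Set.Ioi 0) ∧
      Tendsto Wconj (nhdsWithin 0 (Set.Ioi 0)) atTop ∧
      Tendsto Wconj atTop (nhds 0) ∧
      (fun k => (Y12 k, W12 k)) '' (Set.Ioo 0 k₀) =
        (fun Y => (Y, Wconj Y)) '' (Set.Ioi 0) := by
  refine ⟨Y12_strictAnti hk₀ hroot, Y12_tendsto_zero_right, Y12_tendsto_k0 hk₀ hroot,
    W12_strictMono hk₀ hroot, W12_tendsto_zero hk₀ hroot, W12_tendsto_atTop hk₀ hroot,
    Wconj k₀, ?_, ?_, ?_, ?_, ?_⟩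
  · intro y hy
    exact W12_pos hk₀ hroot (inv_spec hk₀ hroot hy).1
  · intro y1 h1 y2 h2 hlt
    obtain ⟨m1, e1⟩ := inv_spec hk₀ hroot h1
    obtain ⟨m2, e2⟩ := inv_spec hk₀ hroot h2
    have hkey : Function.invFunOn Y12 (Ioo 0 k₀) y2 < Function.invFunOn Y12 (Ioo 0 k₀) y1 := by
      apply invY_lt hk₀ hroot h2 m1
      rw [e1]; exact hlt
    exact W12_strictMono hk₀ hroot m2 m1 hkey
  · rw [tendsto_atTop]
    intro M
    obtain ⟨c, hcM, hc⟩ := (((W12_tendsto_atTop hk₀ hroot).eventually_ge_atTop M).and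
      (eventually_mem_set.2 (Ioo_mem_nhdsLT hk₀.1))).exists
    filter_upwards [Ioo_mem_nhdsGT (Y12_pos hk₀ hroot hc)] with y hy
    have hy0 : y ∈ Ioi (0:ℝ) := hy.1
    have hgt : c < Function.invFunOn Y12 (Ioo 0 k₀) y := invY_gt hk₀ hroot hy0 hc hy.2
    have := W12_strictMono hk₀ hroot hc (inv_spec hk₀ hroot hy0).1 hgt
    calc M ≤ W12 c := hcM
      _ ≤ Wconj k₀ y := this.le
  · rw [tendsto_order]
    constructor
    · intro a ha
      filter_upwards [eventually_gt_atTop (0:ℝ)] with y hy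
      have := W12_pos hk₀ hroot (inv_spec hk₀ hroot hy).1
      exact lt_trans ha this
    · intro a ha
      obtain ⟨c, hcM, hc⟩ := (((W12_tendsto_zero hk₀ hroot).eventually_lt_const ha).and
        (eventually_mem_set.2 (Ioo_mem_nhdsGT hk₀.1))).exists
      filter_upwards [eventually_gt_atTop (max 0 (Y12 c))] with y hy
      have hy0 : y ∈ Ioi (0:ℝ) := lt_of_le_of_lt (le_max_left _ _) hy
      have hyc : Y12 c < y := lt_of_le_of_lt (le_max_right _ _) hy
      have hlt : Function.invFunOn Y12 (Ioo 0 k₀) y < c := invY_lt hk₀ hroot hy0 hc hyc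
      have := W12_strictMono hk₀ hroot (inv_spec hk₀ hroot hy0).1 hc hlt
      calc Wconj k₀ y < W12 c := this
        _ < a := hcM
  · apply Subset.antisymm
    · rintro _ ⟨k, hk, rfl⟩
      refine ⟨Y12 k, Y12_pos hk₀ hroot hk, ?_⟩
      simp only [Wconj_comp hk₀ hroot hk]
    · rintro _ ⟨y, hy, rfl⟩
      obtain ⟨hm, he⟩ := inv_spec hk₀ hroot hy
      refine ⟨Function.invFunOn Y12 (Ioo 0 k₀) y, hm, ?_⟩
      simp only [he]
      rfl
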